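/- In PG(3,q), for q ≥ 2, the number of planes meeting the twisted cubic C in exactly 3 points is (q^3 − q)/6, the number of planes meeting C in exactly 2 points is q^2 + q, and the number of planes meeting C in 0 points is (q^3 − q)/3 when q ≥ 5. -/

import Mathlib

open scoped LinearAlgebra.Projectivization

lemma twistedCubic_vec_ne_zero {F : Type} [Field F] (a b c : F) :
    ![a, b, c, (1 : F)] ≠ 0 := by
  intro h; simpa using congrFun h 3

lemma infty_vec_ne_zero {F : Type} [Field F] : ![(1 : F), 0, 0, 0] ≠ 0 := by
  intro h; simpa using congrFun h 0

/-- The twisted cubic in `PG(3,q)`. -/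
def twistedCubic (F : Type) [Field F] : Set (ℙ F (Fin 4 → F)) :=
  {p | (∃ t : F, p = Projectivization.mk F ![t ^ 3, t ^ 2, t, 1]
          (twistedCubic_vec_ne_zero _ _ _)) ∨
       p = Projectivization.mk F ![1, 0, 0, 0] infty_vec_ne_zero}

open Polynomial

variable {F : Type} [Field F]

/-- linear functional given by dot product with `v`. -/
def dlin (v : Fin 4 → F) : (Fin 4 → F) →ₗ[F] F :=
  v 0 • LinearMap.proj 0 + v 1 • LinearMap.proj 1 + v 2 • LinearMap.proj 2 + v 3 • LinearMap.proj 3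

lemma dlin_apply (v w : Fin 4 → F) :
    dlin v w = v 0 * w 0 + v 1 * w 1 + v 2 * w 2 + v 3 * w 3 := by
  simp [dlin, LinearMap.proj]

lemma dlin_single (v : Fin 4 → F) (j : Fin 4) : dlin v (Pi.single j 1) = v j := by
  fin_cases j <;> simp [dlin_apply, Pi.single_apply] <;> rfl

lemma dlin_vec (v : Fin 4 → F) (a b c d : F) :
    dlin v ![a, b, c, d] = v 0 * a + v 1 * b + v 2 * c + v 3 * d := by
  simp [dlin_apply]

lemma dlin_eq_zero_iff (v : Fin 4 → F) : dlin v = 0 ↔ v = 0 := by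
  constructor
  · intro h; funext j
    have := congrArg (fun f : (Fin 4 → F) →ₗ[F] F => f (Pi.single j 1)) h
    simpa [dlin_single] using this
  · rintro rfl; ext w; simp [dlin_apply]

lemma finrank_ker_dlin (v : Fin 4 → F) (hv : v ≠ 0) :
    Module.finrank F (LinearMap.ker (dlin v)) = 3 := by
  have hrn := (dlin v).finrank_range_add_finrank_ker
  have h4 : Module.finrank F (Fin 4 → F) = 4 := by simpa using Module.finrank_fin_fun (R := F) (n := 4)
  obtain ⟨j, hj⟩ : ∃ j, v j ≠ 0 := by
    by_contra h; push_neg at h; exact hv (funext h)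
  have hne : LinearMap.range (dlin v) ≠ ⊥ := by
    intro h
    have : dlin v (Pi.single j 1) = 0 := by
      have : dlin v (Pi.single j 1) ∈ LinearMap.range (dlin v) := ⟨_, rfl⟩
      rw [h] at this; simpa using this
    rw [dlin_single] at this; exact hj this
  have h1 : Module.finrank F (LinearMap.range (dlin v)) = 1 := by
    have hle : Module.finrank F (LinearMap.range (dlin v)) ≤ 1 := by
      simpa using (LinearMap.range (dlin v)).finrank_le
    have hpos : 0 < Module.finrank F (LinearMap.range (dlin v)) :=
      Module.finrank_pos_iff.mpr (Submodule.nontrivial_iff_ne_bot.mpr hne)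
    omega
  omega

lemma exists_dlin_of_finrank_three (W : Submodule F (Fin 4 → F)) [Fintype F]
    (hW : Module.finrank F W = 3) : ∃ v : Fin 4 → F, v ≠ 0 ∧ W = LinearMap.ker (dlin v) := by
  have h4 : Module.finrank F (Fin 4 → F) = 4 := by simpa using Module.finrank_fin_fun (R := F) (n := 4)
  have hq : Module.finrank F ((Fin 4 → F) ⧸ W) = 1 := by
    have := Submodule.finrank_quotient_add_finrank W
    omega
  obtain ⟨e⟩ : Nonempty (((Fin 4 → F) ⧸ W) ≃ₗ[F] F) :=
    FiniteDimensional.nonempty_linearEquiv_of_finrank_eq (by simpa using hq)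
  set φ : (Fin 4 → F) →ₗ[F] F := e.toLinearMap ∘ₗ W.mkQ with hφ
  have hker : LinearMap.ker φ = W := by
    rw [hφ, LinearMap.ker_comp, LinearEquiv.ker, Submodule.comap_bot, Submodule.ker_mkQ]
  set v : Fin 4 → F := fun j => φ (Pi.single j 1) with hv
  have heq : dlin v = φ := by
    refine LinearMap.ext fun w => ?_
    have hw : w = ∑ j : Fin 4, w j • (Pi.single j 1 : Fin 4 → F) := by
      funext k
      simp [Finset.sum_apply, Pi.single_apply, Finset.sum_ite_eq']
    rw [dlin_apply]
    conv_rhs => rw [hw]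
    rw [map_sum]
    simp only [map_smul, smul_eq_mul]
    rw [Fin.sum_univ_four]
    simp [hv, mul_comm]
  refine ⟨v, ?_, by rw [heq, hker]⟩
  intro h
  rw [h] at heq
  have : LinearMap.ker φ = ⊤ := by
    rw [← heq]; ext x; simp [dlin_apply]
  rw [hker] at this
  rw [this] at hW
  rw [finrank_top] at hW
  omega

lemma dlin_prop (v w : Fin 4 → F) (hv : v ≠ 0) (hw : w ≠ 0)
    (h : LinearMap.ker (dlin v) = LinearMap.ker (dlin w)) : ∃ c : F, c ≠ 0 ∧ w = c • v := by
  obtain ⟨i, hi⟩ : ∃ i, v i ≠ 0 := by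
    by_contra hc; push_neg at hc; exact hv (funext hc)
  have hwi : w i ≠ 0 := by
    intro hwi
    have : Pi.single i (1:F) ∈ LinearMap.ker (dlin w) := by
      simp [LinearMap.mem_ker, dlin_single, hwi]
    rw [← h] at this
    simp [LinearMap.mem_ker, dlin_single] at this
    exact hi this
  refine ⟨w i / v i, div_ne_zero hwi hi, ?_⟩
  funext j
  set x : Fin 4 → F := v i • (Pi.single j 1 : Fin 4 → F) - v j • (Pi.single i 1 : Fin 4 → F) with hxdef
  have hx : dlin v x = 0 := by
    rw [hxdef]; simp [map_sub, map_smul, dlin_single, mul_comm]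
  have hx2 : dlin w x = 0 := by
    have hxk : x ∈ LinearMap.ker (dlin v) := LinearMap.mem_ker.mpr hx
    rw [h] at hxk
    exact LinearMap.mem_ker.mp hxk
  rw [hxdef] at hx2
  simp only [map_sub, map_smul, dlin_single, smul_eq_mul] at hx2
  have hx' : v i * w j = v j * w i := sub_eq_zero.mp hx2
  have hj : w j = v j * w i / v i := by field_simp; linear_combination hx'
  simp only [Pi.smul_apply, smul_eq_mul, hj]
  ring

noncomputable def cub (b c d : F) : F[X] := X ^ 3 + C b * X ^ 2 + C c * X + C d
noncomputable def qud (c d : F) : F[X] := X ^ 2 + C c * X + C d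

lemma cub_monic (b c d : F) : (cub b c d).Monic := by
  unfold cub; monicity!

lemma cub_natDegree (b c d : F) : (cub b c d).natDegree = 3 := by
  unfold cub; compute_degree!

lemma cub_ne_zero (b c d : F) : cub b c d ≠ 0 := (cub_monic b c d).ne_zero

lemma qud_monic (c d : F) : (qud c d).Monic := by
  unfold qud; monicity!

lemma qud_natDegree (c d : F) : (qud c d).natDegree = 2 := by
  unfold qud; compute_degree!

lemma qud_ne_zero (c d : F) : qud c d ≠ 0 := (qud_monic c d).ne_zero

lemma mem_roots_cub (b c d t : F) :
    t ∈ (cub b c d).roots ↔ t ^ 3 + b * t ^ 2 + c * t + d = 0 := by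
  rw [mem_roots (cub_ne_zero b c d), IsRoot.def]
  unfold cub
  simp

lemma mem_roots_qud (c d t : F) :
    t ∈ (qud c d).roots ↔ t ^ 2 + c * t + d = 0 := by
  rw [mem_roots (qud_ne_zero c d), IsRoot.def]
  unfold qud
  simp

lemma cub_coeff (b c d : F) : (cub b c d).coeff 2 = b ∧ (cub b c d).coeff 1 = c ∧
    (cub b c d).coeff 0 = d := by
  unfold cub
  refine ⟨?_, ?_, ?_⟩ <;> simp [coeff_X_pow]

lemma qud_coeff (c d : F) : (qud c d).coeff 1 = c ∧ (qud c d).coeff 0 = d := by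
  unfold qud
  refine ⟨?_, ?_⟩ <;> simp [coeff_X_pow]

lemma cub_inj {b c d b' c' d' : F} (h : cub b c d = cub b' c' d') :
    b = b' ∧ c = c' ∧ d = d' := by
  obtain ⟨h2, h1, h0⟩ := cub_coeff b c d
  obtain ⟨h2', h1', h0'⟩ := cub_coeff b' c' d'
  exact ⟨by rw [← h2, ← h2', h], by rw [← h1, ← h1', h], by rw [← h0, ← h0', h]⟩

lemma qud_inj {c d c' d' : F} (h : qud c d = qud c' d') : c = c' ∧ d = d' := by
  obtain ⟨h1, h0⟩ := qud_coeff c d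
  obtain ⟨h1', h0'⟩ := qud_coeff c' d'
  exact ⟨by rw [← h1, ← h1', h], by rw [← h0, ← h0', h]⟩

/-- any monic polynomial of natDegree 3 is a `cub`. -/
lemma monic_natDegree_three_eq_cub {p : F[X]} (hm : p.Monic) (hd : p.natDegree = 3) :
    p = cub (p.coeff 2) (p.coeff 1) (p.coeff 0) := by
  ext n
  have h3 : p.coeff 3 = 1 := by
    have := hm.leadingCoeff
    rwa [leadingCoeff, hd] at this
  rcases n with _ | _ | _ | _ | n
  · simp [cub, coeff_X_pow]
  · simp [cub, coeff_X_pow]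
  · simp [cub, coeff_X_pow]
  · simp [cub, coeff_X_pow, h3]
  · rw [p.coeff_eq_zero_of_natDegree_lt (by omega)]
    simp [cub, coeff_X_pow, coeff_C]

lemma monic_natDegree_two_eq_qud {p : F[X]} (hm : p.Monic) (hd : p.natDegree = 2) :
    p = qud (p.coeff 1) (p.coeff 0) := by
  ext n
  have h2 : p.coeff 2 = 1 := by
    have := hm.leadingCoeff
    rwa [leadingCoeff, hd] at this
  rcases n with _ | _ | _ | n
  · simp [qud, coeff_X_pow]
  · simp [qud, coeff_X_pow]
  · simp [qud, coeff_X_pow, h2]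
  · rw [p.coeff_eq_zero_of_natDegree_lt (by omega)]
    simp [qud, coeff_X_pow, coeff_C]

lemma monic_natDegree_one_eq {p : F[X]} (hm : p.Monic) (hd : p.natDegree = 1) :
    p = X - C (-(p.coeff 0)) := by
  have h1 : p.coeff 1 = 1 := by
    have := hm.leadingCoeff
    rwa [leadingCoeff, hd] at this
  ext n
  rcases n with _ | _ | n
  · simp
  · simp [h1]
  · rw [p.coeff_eq_zero_of_natDegree_lt (by omega)]
    simp [coeff_X, coeff_C]

/-- a monic polynomial over a field whose number of roots (with multiplicity) is
one less than its degree cannot exist... more precisely: card roots ≠ natDegree - 1 -/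
lemma roots_card_ne_pred {p : F[X]} (hm : p.Monic) (h : Multiset.card p.roots + 1 = p.natDegree) :
    False := by
  have hp : p ≠ 0 := hm.ne_zero
  obtain ⟨u, hu⟩ := p.prod_multiset_X_sub_C_dvd
  set g : F[X] := (p.roots.map fun a => X - C a).prod with hg
  have hgm : g.Monic := monic_multiset_prod_of_monic _ _ fun i _ => monic_X_sub_C i
  have hgd : g.natDegree = Multiset.card p.roots := by
    rw [hg, natDegree_multiset_prod_X_sub_C_eq_card]
  have hu0 : u ≠ 0 := by rintro rfl; rw [mul_zero] at hu; exact hp hu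
  have hum : u.Monic := hgm.of_mul_monic_left (hu ▸ hm)
  have hud : u.natDegree = 1 := by
    have := natDegree_mul hgm.ne_zero hu0
    rw [← hu] at this
    omega
  have hufact : u = X - C (-(u.coeff 0)) := monic_natDegree_one_eq hum hud
  have hroots : p.roots = p.roots + u.roots := by
    conv_lhs => rw [hu]
    rw [roots_mul (hu ▸ hp), hg, roots_multiset_prod_X_sub_C]
  have : u.roots = 0 := by
    have := congrArg Multiset.card hroots
    rw [Multiset.card_add] at this
    have h0 : Multiset.card u.roots = 0 := by omega
    exact Multiset.card_eq_zero.mp h0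
  rw [hufact] at this
  rw [roots_X_sub_C] at this
  simp at this

section count
variable [DecidableEq F]

noncomputable def rc3 (b c d : F) : ℕ := (cub b c d).roots.toFinset.card
noncomputable def rc2 (c d : F) : ℕ := (qud c d).roots.toFinset.card

lemma rc3_le (b c d : F) : rc3 b c d ≤ 3 := by
  refine (Multiset.toFinset_card_le _).trans ?_
  simpa [cub_natDegree] using (cub b c d).card_roots'

lemma rc2_le (c d : F) : rc2 c d ≤ 2 := by
  refine (Multiset.toFinset_card_le _).trans ?_
  simpa [qud_natDegree] using (qud c d).card_roots'

lemma cub_roots_card_eq_three_of_ge_two (b c d : F) (h : 2 ≤ rc3 b c d) :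
    Multiset.card (cub b c d).roots = 3 := by
  have h1 : Multiset.card (cub b c d).roots ≤ 3 := by
    simpa [cub_natDegree] using (cub b c d).card_roots'
  have h2 : rc3 b c d ≤ Multiset.card (cub b c d).roots := Multiset.toFinset_card_le _
  rcases Nat.lt_or_ge (Multiset.card (cub b c d).roots) 3 with hlt | hge
  · exfalso
    exact roots_card_ne_pred (cub_monic b c d) (by rw [cub_natDegree]; omega)
  · omega

lemma qud_roots_card_eq_two_of_ge_one (c d : F) (h : 1 ≤ rc2 c d) :
    Multiset.card (qud c d).roots = 2 := by
  have h1 : Multiset.card (qud c d).roots ≤ 2 := by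
    simpa [qud_natDegree] using (qud c d).card_roots'
  have h2 : rc2 c d ≤ Multiset.card (qud c d).roots := Multiset.toFinset_card_le _
  rcases Nat.lt_or_ge (Multiset.card (qud c d).roots) 2 with hlt | hge
  · exfalso
    exact roots_card_ne_pred (qud_monic c d) (by rw [qud_natDegree]; omega)
  · omega

lemma toFinset_val_eq {m : Multiset F} (h : m.toFinset.card = Multiset.card m) :
    m.toFinset.val = m := by
  rw [Multiset.toFinset_val]
  refine Multiset.eq_of_le_of_card_le (Multiset.dedup_le m) ?_
  have : (m.toFinset).card = Multiset.card m.dedup := rfl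
  omega

lemma cub_eq_prod_roots {b c d : F} (h : Multiset.card (cub b c d).roots = 3) :
    cub b c d = ((cub b c d).roots.map fun a => X - C a).prod :=
  (prod_multiset_X_sub_C_of_monic_of_roots_card_eq (cub_monic _ _ _)
    (by rw [cub_natDegree]; exact h)).symm

lemma qud_eq_prod_roots {c d : F} (h : Multiset.card (qud c d).roots = 2) :
    qud c d = ((qud c d).roots.map fun a => X - C a).prod :=
  (prod_multiset_X_sub_C_of_monic_of_roots_card_eq (qud_monic _ _)
    (by rw [qud_natDegree]; exact h)).symm

variable [Fintype F]

lemma count_cub_three :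
    (Finset.univ.filter fun p : F × F × F => rc3 p.1 p.2.1 p.2.2 = 3).card =
      (Fintype.card F).choose 3 := by
  rw [← Finset.card_univ, ← Finset.card_powersetCard]
  refine Finset.card_bij (fun p _ => (cub p.1 p.2.1 p.2.2).roots.toFinset) ?_ ?_ ?_
  · intro a ha
    rw [Finset.mem_filter] at ha
    rw [Finset.mem_powersetCard]
    exact ⟨Finset.subset_univ _, ha.2⟩
  · intro a ha b hb hab
    rw [Finset.mem_filter] at ha hb
    have h3a : Multiset.card (cub a.1 a.2.1 a.2.2).roots = 3 :=
      cub_roots_card_eq_three_of_ge_two _ _ _ (by omega)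
    have h3b : Multiset.card (cub b.1 b.2.1 b.2.2).roots = 3 :=
      cub_roots_card_eq_three_of_ge_two _ _ _ (by omega)
    have hva : (cub a.1 a.2.1 a.2.2).roots.toFinset.val = (cub a.1 a.2.1 a.2.2).roots :=
      toFinset_val_eq (by rw [h3a]; exact ha.2)
    have hvb : (cub b.1 b.2.1 b.2.2).roots.toFinset.val = (cub b.1 b.2.1 b.2.2).roots :=
      toFinset_val_eq (by rw [h3b]; exact hb.2)
    have : cub a.1 a.2.1 a.2.2 = cub b.1 b.2.1 b.2.2 := by
      rw [cub_eq_prod_roots h3a, cub_eq_prod_roots h3b, ← hva, ← hvb, hab]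
    obtain ⟨h1, h2, h3⟩ := cub_inj this
    exact Prod.ext h1 (Prod.ext h2 h3)
  · intro S hS
    rw [Finset.mem_powersetCard] at hS
    set p : F[X] := (S.val.map fun a => X - C a).prod with hp
    have hpm : p.Monic := monic_multiset_prod_of_monic _ _ fun i _ => monic_X_sub_C i
    have hpd : p.natDegree = 3 := by
      rw [hp, natDegree_multiset_prod_X_sub_C_eq_card]; simpa using hS.2
    have hpr : p.roots = S.val := by rw [hp, roots_multiset_prod_X_sub_C]
    have hform : p = cub (p.coeff 2) (p.coeff 1) (p.coeff 0) :=
      monic_natDegree_three_eq_cub hpm hpd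
    refine ⟨(p.coeff 2, p.coeff 1, p.coeff 0), ?_, ?_⟩
    · rw [Finset.mem_filter]
      refine ⟨Finset.mem_univ _, ?_⟩
      show (cub _ _ _).roots.toFinset.card = 3
      rw [← hform, hpr, Finset.val_toFinset]
      exact hS.2
    · show (cub _ _ _).roots.toFinset = S
      rw [← hform, hpr, Finset.val_toFinset]

lemma count_qud_two :
    (Finset.univ.filter fun p : F × F => rc2 p.1 p.2 = 2).card =
      (Fintype.card F).choose 2 := by
  rw [← Finset.card_univ, ← Finset.card_powersetCard]
  refine Finset.card_bij (fun p _ => (qud p.1 p.2).roots.toFinset) ?_ ?_ ?_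
  · intro a ha
    rw [Finset.mem_filter] at ha
    rw [Finset.mem_powersetCard]
    exact ⟨Finset.subset_univ _, ha.2⟩
  · intro a ha b hb hab
    rw [Finset.mem_filter] at ha hb
    have h3a : Multiset.card (qud a.1 a.2).roots = 2 :=
      qud_roots_card_eq_two_of_ge_one _ _ (by omega)
    have h3b : Multiset.card (qud b.1 b.2).roots = 2 :=
      qud_roots_card_eq_two_of_ge_one _ _ (by omega)
    have hva : (qud a.1 a.2).roots.toFinset.val = (qud a.1 a.2).roots :=
      toFinset_val_eq (by rw [h3a]; exact ha.2)
    have hvb : (qud b.1 b.2).roots.toFinset.val = (qud b.1 b.2).roots :=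
      toFinset_val_eq (by rw [h3b]; exact hb.2)
    have : qud a.1 a.2 = qud b.1 b.2 := by
      rw [qud_eq_prod_roots h3a, qud_eq_prod_roots h3b, ← hva, ← hvb, hab]
    obtain ⟨h1, h2⟩ := qud_inj this
    exact Prod.ext h1 h2
  · intro S hS
    rw [Finset.mem_powersetCard] at hS
    set p : F[X] := (S.val.map fun a => X - C a).prod with hp
    have hpm : p.Monic := monic_multiset_prod_of_monic _ _ fun i _ => monic_X_sub_C i
    have hpd : p.natDegree = 2 := by
      rw [hp, natDegree_multiset_prod_X_sub_C_eq_card]; simpa using hS.2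
    have hpr : p.roots = S.val := by rw [hp, roots_multiset_prod_X_sub_C]
    have hform : p = qud (p.coeff 1) (p.coeff 0) :=
      monic_natDegree_two_eq_qud hpm hpd
    refine ⟨(p.coeff 1, p.coeff 0), ?_, ?_⟩
    · rw [Finset.mem_filter]
      refine ⟨Finset.mem_univ _, ?_⟩
      show (qud _ _).roots.toFinset.card = 2
      rw [← hform, hpr, Finset.val_toFinset]
      exact hS.2
    · show (qud _ _).roots.toFinset = S
      rw [← hform, hpr, Finset.val_toFinset]

lemma multiset_pair_decomp {m : Multiset F} {r s : F} (hrs : r ≠ s) (h : m.toFinset = {r, s}) :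
    m = Multiset.count r m • ({r} : Multiset F) + Multiset.count s m • ({s} : Multiset F) := by
  conv_lhs => rw [← Multiset.toFinset_sum_count_nsmul_eq m]
  rw [h, Finset.sum_pair hrs]

lemma multiset_single_decomp {m : Multiset F} {r : F} (h : m.toFinset = {r}) :
    m = Multiset.count r m • ({r} : Multiset F) := by
  conv_lhs => rw [← Multiset.toFinset_sum_count_nsmul_eq m]
  rw [h, Finset.sum_singleton]

lemma ppoly_monic (r s : F) : ((X - C r) ^ 2 * (X - C s)).Monic :=
  ((monic_X_sub_C r).pow 2).mul (monic_X_sub_C s)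

lemma ppoly_natDegree (r s : F) : ((X - C r) ^ 2 * (X - C s)).natDegree = 3 := by
  rw [natDegree_mul (pow_ne_zero 2 (X_sub_C_ne_zero r)) (X_sub_C_ne_zero s),
    natDegree_pow, natDegree_X_sub_C, natDegree_X_sub_C]

lemma ppoly_roots (r s : F) : ((X - C r) ^ 2 * (X - C s)).roots =
    2 • ({r} : Multiset F) + {s} := by
  rw [roots_mul (mul_ne_zero (pow_ne_zero 2 (X_sub_C_ne_zero r)) (X_sub_C_ne_zero s)),
    roots_pow, roots_X_sub_C, roots_X_sub_C]

lemma count_cub_two :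
    (Finset.univ.filter fun p : F × F × F => rc3 p.1 p.2.1 p.2.2 = 2).card =
      Fintype.card F * Fintype.card F - Fintype.card F := by
  rw [← Finset.card_univ (α := F), ← Finset.offDiag_card]
  symm
  refine Finset.card_bij (fun rs _ => (((X - C rs.1) ^ 2 * (X - C rs.2)).coeff 2,
    ((X - C rs.1) ^ 2 * (X - C rs.2)).coeff 1, ((X - C rs.1) ^ 2 * (X - C rs.2)).coeff 0)) ?_ ?_ ?_
  · rintro ⟨r, s⟩ hrs
    rw [Finset.mem_offDiag] at hrs
    have hrs' : r ≠ s := hrs.2.2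
    rw [Finset.mem_filter]
    refine ⟨Finset.mem_univ _, ?_⟩
    show rc3 _ _ _ = 2
    unfold rc3
    rw [← monic_natDegree_three_eq_cub (ppoly_monic r s) (ppoly_natDegree r s), ppoly_roots,
      Multiset.toFinset_add, Multiset.toFinset_nsmul _ 2 (by norm_num),
      Multiset.toFinset_singleton, Multiset.toFinset_singleton]
    rw [show ({r} ∪ {s} : Finset F) = {r, s} from by ext x; simp]
    exact Finset.card_pair hrs'
  · rintro ⟨r, s⟩ hrs ⟨r', s'⟩ hrs' hab
    dsimp only at hab
    rw [Finset.mem_offDiag] at hrs hrs'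
    simp only [Prod.mk.injEq] at hab
    obtain ⟨c2, c1, c0⟩ := hab
    have hp : (X - C r) ^ 2 * (X - C s) = (X - C r') ^ 2 * (X - C s') := by
      rw [monic_natDegree_three_eq_cub (ppoly_monic r s) (ppoly_natDegree r s),
        monic_natDegree_three_eq_cub (ppoly_monic r' s') (ppoly_natDegree r' s'), c2, c1, c0]
    have heq : 2 • ({r} : Multiset F) + {s} = 2 • ({r'} : Multiset F) + {s'} := by
      rw [← ppoly_roots, hp, ppoly_roots]
    have hr : r = r' := by
      have hc := congrArg (Multiset.count r') heq
      simp only [Multiset.count_add, Multiset.count_nsmul, Multiset.count_singleton] at hc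
      split_ifs at hc <;> simp_all <;> omega
    subst hr
    have hs : s = s' := Multiset.singleton_inj.mp (add_left_cancel heq)
    rw [hs]
  · rintro ⟨b, c, d⟩ hmem
    rw [Finset.mem_filter] at hmem
    have h2 : rc3 b c d = 2 := hmem.2
    have hm3 : Multiset.card (cub b c d).roots = 3 :=
      cub_roots_card_eq_three_of_ge_two _ _ _ (by omega)
    obtain ⟨r, s, hrs, hS⟩ := Finset.card_eq_two.mp h2
    have hdec := multiset_pair_decomp hrs hS
    set a1 := Multiset.count r (cub b c d).roots with ha1
    set a2 := Multiset.count s (cub b c d).roots with ha2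
    have hsum : a1 + a2 = 3 := by
      have := congrArg Multiset.card hdec
      rw [hm3] at this
      simp [Multiset.card_nsmul] at this
      omega
    have hr1 : 1 ≤ a1 := by
      rw [ha1]
      refine Multiset.one_le_count_iff_mem.mpr ?_
      rw [← Multiset.mem_toFinset, hS]
      simp
    have hr2 : 1 ≤ a2 := by
      rw [ha2]
      refine Multiset.one_le_count_iff_mem.mpr ?_
      rw [← Multiset.mem_toFinset, hS]
      simp
    have hfact : cub b c d = (X - C r) ^ a1 * (X - C s) ^ a2 := by
      rw [cub_eq_prod_roots hm3]
      conv_lhs => rw [hdec]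
      rw [Multiset.map_add, Multiset.prod_add]
      congr 1 <;>
        simp [Multiset.nsmul_singleton, Multiset.map_replicate, Multiset.prod_replicate]
    rcases (by omega : a1 = 2 ∧ a2 = 1 ∨ a1 = 1 ∧ a2 = 2) with ⟨e1, e2⟩ | ⟨e1, e2⟩
    · rw [e1, e2, pow_one] at hfact
      refine ⟨(r, s), Finset.mem_offDiag.mpr ⟨Finset.mem_univ _, Finset.mem_univ _, hrs⟩, ?_⟩
      dsimp only
      have hthis := monic_natDegree_three_eq_cub (ppoly_monic r s) (ppoly_natDegree r s)
      obtain ⟨e1', e2', e3'⟩ := cub_inj ((hfact.trans hthis).symm)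
      exact Prod.ext e1' (Prod.ext e2' e3')
    · rw [e1, e2, pow_one] at hfact
      have hfact' : cub b c d = (X - C s) ^ 2 * (X - C r) := by rw [hfact]; ring
      refine ⟨(s, r), Finset.mem_offDiag.mpr ⟨Finset.mem_univ _, Finset.mem_univ _, hrs.symm⟩, ?_⟩
      dsimp only
      have hthis := monic_natDegree_three_eq_cub (ppoly_monic s r) (ppoly_natDegree s r)
      obtain ⟨e1', e2', e3'⟩ := cub_inj ((hfact'.trans hthis).symm)
      exact Prod.ext e1' (Prod.ext e2' e3')

lemma qpoly_monic (r : F) : ((X - C r) ^ 2).Monic := (monic_X_sub_C r).pow 2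

lemma qpoly_natDegree (r : F) : ((X - C r) ^ 2).natDegree = 2 := by
  rw [natDegree_pow, natDegree_X_sub_C]

lemma qpoly_roots (r : F) : ((X - C r) ^ 2).roots = 2 • ({r} : Multiset F) := by
  rw [roots_pow, roots_X_sub_C]

lemma count_qud_one :
    (Finset.univ.filter fun p : F × F => rc2 p.1 p.2 = 1).card = Fintype.card F := by
  rw [← Finset.card_univ (α := F)]
  symm
  refine Finset.card_bij (fun r _ => (((X - C r) ^ 2).coeff 1, ((X - C r) ^ 2).coeff 0)) ?_ ?_ ?_
  · intro r _
    rw [Finset.mem_filter]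
    refine ⟨Finset.mem_univ _, ?_⟩
    show rc2 _ _ = 1
    unfold rc2
    rw [← monic_natDegree_two_eq_qud (qpoly_monic r) (qpoly_natDegree r), qpoly_roots,
      Multiset.toFinset_nsmul _ 2 (by norm_num), Multiset.toFinset_singleton]
    exact Finset.card_singleton r
  · intro r _ r' _ hab
    simp only [Prod.mk.injEq] at hab
    obtain ⟨c1, c0⟩ := hab
    have hp : (X - C r) ^ 2 = (X - C r') ^ 2 := by
      rw [monic_natDegree_two_eq_qud (qpoly_monic r) (qpoly_natDegree r),
        monic_natDegree_two_eq_qud (qpoly_monic r') (qpoly_natDegree r'), c1, c0]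
    have heq : 2 • ({r} : Multiset F) = 2 • ({r'} : Multiset F) := by
      rw [← qpoly_roots, hp, qpoly_roots]
    have := congrArg (Multiset.count r) heq
    simp only [Multiset.count_nsmul, Multiset.count_singleton] at this
    split_ifs at this <;> simp_all
  · rintro ⟨c, d⟩ hmem
    rw [Finset.mem_filter] at hmem
    have h1 : rc2 c d = 1 := hmem.2
    have hm2 : Multiset.card (qud c d).roots = 2 :=
      qud_roots_card_eq_two_of_ge_one _ _ (by omega)
    obtain ⟨r, hS⟩ := Finset.card_eq_one.mp h1
    have hdec := multiset_single_decomp hS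
    have hcnt : Multiset.count r (qud c d).roots = 2 := by
      have h := congrArg Multiset.card hdec
      rw [hm2, Multiset.card_nsmul, Multiset.card_singleton, mul_one] at h
      omega
    rw [hcnt] at hdec
    have hfact : qud c d = (X - C r) ^ 2 := by
      rw [qud_eq_prod_roots hm2]
      conv_lhs => rw [hdec]
      simp [Multiset.nsmul_singleton, Multiset.map_replicate, Multiset.prod_replicate]
      ring
    refine ⟨r, Finset.mem_univ _, ?_⟩
    have hthis := monic_natDegree_two_eq_qud (qpoly_monic r) (qpoly_natDegree r)
    obtain ⟨e1', e2'⟩ := qud_inj ((hfact.trans hthis).symm)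
    exact Prod.ext e1' e2'

lemma rc3_eq_card_filter (b c d : F) :
    rc3 b c d = (Finset.univ.filter fun t : F => t ^ 3 + b * t ^ 2 + c * t + d = 0).card := by
  unfold rc3
  congr 1
  ext t
  simp only [Multiset.mem_toFinset, mem_roots_cub, Finset.mem_filter, Finset.mem_univ, true_and]

lemma rc2_eq_card_filter (c d : F) :
    rc2 c d = (Finset.univ.filter fun t : F => t ^ 2 + c * t + d = 0).card := by
  unfold rc2
  congr 1
  ext t
  simp only [Multiset.mem_toFinset, mem_roots_qud, Finset.mem_filter, Finset.mem_univ, true_and]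

lemma sum_rc3 : ∑ p : F × F × F, rc3 p.1 p.2.1 p.2.2 = Fintype.card F ^ 3 := by
  have key : ∀ t : F, (∑ p : F × F × F,
      if t ^ 3 + p.1 * t ^ 2 + p.2.1 * t + p.2.2 = 0 then 1 else 0) = Fintype.card F ^ 2 := by
    intro t
    have hiff : ∀ b c d : F, (t ^ 3 + b * t ^ 2 + c * t + d = 0) ↔
        d = -(t ^ 3 + b * t ^ 2 + c * t) := by
      intro b c d; constructor <;> intro h <;> linear_combination h
    simp only [hiff]
    simp only [Fintype.sum_prod_type]
    simp only [Finset.sum_ite_eq', Finset.mem_univ, if_true]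
    simp [Finset.card_univ, sq]
  calc ∑ p : F × F × F, rc3 p.1 p.2.1 p.2.2
      = ∑ p : F × F × F, ∑ t : F,
          (if t ^ 3 + p.1 * t ^ 2 + p.2.1 * t + p.2.2 = 0 then 1 else 0) := by
        refine Finset.sum_congr rfl fun p _ => ?_
        rw [rc3_eq_card_filter, Finset.card_filter]
    _ = ∑ t : F, ∑ p : F × F × F,
          (if t ^ 3 + p.1 * t ^ 2 + p.2.1 * t + p.2.2 = 0 then 1 else 0) := Finset.sum_comm
    _ = ∑ _t : F, Fintype.card F ^ 2 := Finset.sum_congr rfl fun t _ => key t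
    _ = Fintype.card F ^ 3 := by
        rw [Finset.sum_const, Finset.card_univ, smul_eq_mul]
        ring

lemma count_cub_zero :
    (Finset.univ.filter fun p : F × F × F => rc3 p.1 p.2.1 p.2.2 = 0).card =
      (Fintype.card F * Fintype.card F - Fintype.card F) + 2 * (Fintype.card F).choose 3 := by
  have hmaps : ∀ p ∈ (Finset.univ : Finset (F × F × F)),
      rc3 p.1 p.2.1 p.2.2 ∈ Finset.range 4 :=
    fun p _ => Finset.mem_range.mpr (by have := rc3_le p.1 p.2.1 p.2.2; omega)
  have hcard : (Finset.univ : Finset (F × F × F)).card =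
      ∑ k ∈ Finset.range 4, (Finset.univ.filter fun p : F × F × F =>
        rc3 p.1 p.2.1 p.2.2 = k).card :=
    Finset.card_eq_sum_card_fiberwise hmaps
  have hsumfib : ∑ k ∈ Finset.range 4, ∑ p ∈ (Finset.univ.filter fun p : F × F × F =>
      rc3 p.1 p.2.1 p.2.2 = k), rc3 p.1 p.2.1 p.2.2 = ∑ p : F × F × F, rc3 p.1 p.2.1 p.2.2 :=
    Finset.sum_fiberwise_of_maps_to hmaps _
  have hinner : ∀ k, ∑ p ∈ (Finset.univ.filter fun p : F × F × F =>
      rc3 p.1 p.2.1 p.2.2 = k), rc3 p.1 p.2.1 p.2.2 =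
      k * (Finset.univ.filter fun p : F × F × F => rc3 p.1 p.2.1 p.2.2 = k).card := by
    intro k
    rw [Finset.sum_congr rfl (fun p hp => (Finset.mem_filter.mp hp).2), Finset.sum_const,
      smul_eq_mul, mul_comm]
  have htotal : (Finset.univ : Finset (F × F × F)).card = Fintype.card F ^ 3 := by
    simp [Finset.card_univ]
    ring
  rw [sum_rc3] at hsumfib
  simp only [hinner] at hsumfib
  rw [Finset.sum_range_succ, Finset.sum_range_succ, Finset.sum_range_succ,
    Finset.sum_range_one] at hsumfib hcard
  rw [htotal] at hcard
  have key : (Finset.univ.filter fun p : F × F × F => rc3 p.1 p.2.1 p.2.2 = 0).card =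
      (Finset.univ.filter fun p : F × F × F => rc3 p.1 p.2.1 p.2.2 = 2).card +
      2 * (Finset.univ.filter fun p : F × F × F => rc3 p.1 p.2.1 p.2.2 = 3).card := by
    omega
  rw [key, count_cub_two, count_cub_three]


-- ============ geometry ============
open scoped LinearAlgebra.Projectivization

noncomputable def tcp (F : Type) [Field F] (t : F) : ℙ F (Fin 4 → F) :=
  Projectivization.mk F ![t ^ 3, t ^ 2, t, 1] (by intro h; simpa using congrFun h 3)

noncomputable def tci (F : Type) [Field F] : ℙ F (Fin 4 → F) :=
  Projectivization.mk F ![1, 0, 0, 0] (by intro h; simpa using congrFun h 0)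

lemma tcp_injective : Function.Injective (tcp F) := by
  intro t s h
  rw [tcp, tcp, Projectivization.mk_eq_mk_iff'] at h
  obtain ⟨a, ha⟩ := h
  have h3 := congrFun ha 3
  have h2 := congrFun ha 2
  simp [Pi.smul_apply, smul_eq_mul] at h3 h2
  rw [h3, one_mul] at h2
  exact h2.symm

lemma tci_ne_tcp (t : F) : tci F ≠ tcp F t := by
  rw [tci, tcp, Ne, Projectivization.mk_eq_mk_iff']
  rintro ⟨a, ha⟩
  have h3 := congrFun ha 3
  have h0 := congrFun ha 0
  simp [Pi.smul_apply, smul_eq_mul] at h3 h0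
  rw [h3] at h0
  simp at h0

noncomputable def pl (v : Fin 4 → F) : Submodule F (Fin 4 → F) := LinearMap.ker (dlin v)

lemma mem_pl_iff (v u : Fin 4 → F) (hu : u ≠ 0) :
    (Projectivization.mk F u hu).submodule ≤ pl v ↔ dlin v u = 0 := by
  rw [Projectivization.submodule_mk, Submodule.span_singleton_le_iff_mem]
  exact LinearMap.mem_ker

lemma sec_cub (b c d : F) :
    {p ∈ twistedCubic F | p.submodule ≤ pl ![1, b, c, d]} =
      tcp F '' {t : F | t ^ 3 + b * t ^ 2 + c * t + d = 0} := by
  ext p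
  simp only [Set.mem_setOf_eq, Set.mem_image, twistedCubic]
  constructor
  · rintro ⟨hC | rfl, hle⟩
    · obtain ⟨t, rfl⟩ := hC
      refine ⟨t, ?_, rfl⟩
      have h := (mem_pl_iff _ _ _).mp hle
      rw [dlin_vec] at h
      show t ^ 3 + b * t ^ 2 + c * t + d = 0
      simp at h
      linear_combination h
    · exfalso
      have h := (mem_pl_iff _ _ _).mp hle
      rw [dlin_vec] at h
      simp at h
  · rintro ⟨t, ht, rfl⟩
    refine ⟨Or.inl ⟨t, rfl⟩, (mem_pl_iff _ _ _).mpr ?_⟩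
    rw [dlin_vec]
    simp
    linear_combination ht

lemma sec_qud (c d : F) :
    {p ∈ twistedCubic F | p.submodule ≤ pl ![0, 1, c, d]} =
      insert (tci F) (tcp F '' {t : F | t ^ 2 + c * t + d = 0}) := by
  ext p
  simp only [Set.mem_setOf_eq, Set.mem_image, Set.mem_insert_iff, twistedCubic]
  constructor
  · rintro ⟨hC | rfl, hle⟩
    · obtain ⟨t, rfl⟩ := hC
      refine Or.inr ⟨t, ?_, rfl⟩
      have h := (mem_pl_iff _ _ _).mp hle
      rw [dlin_vec] at h
      show t ^ 2 + c * t + d = 0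
      simp at h
      linear_combination h
    · exact Or.inl rfl
  · rintro (rfl | ⟨t, ht, rfl⟩)
    · refine ⟨Or.inr rfl, (mem_pl_iff _ _ _).mpr ?_⟩
      rw [dlin_vec]; simp
    · refine ⟨Or.inl ⟨t, rfl⟩, (mem_pl_iff _ _ _).mpr ?_⟩
      rw [dlin_vec]
      simp
      linear_combination ht

lemma sec_lin (d : F) :
    {p ∈ twistedCubic F | p.submodule ≤ pl ![0, 0, 1, d]} =
      insert (tci F) (tcp F '' {t : F | t + d = 0}) := by
  ext p
  simp only [Set.mem_setOf_eq, Set.mem_image, Set.mem_insert_iff, twistedCubic]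
  constructor
  · rintro ⟨hC | rfl, hle⟩
    · obtain ⟨t, rfl⟩ := hC
      refine Or.inr ⟨t, ?_, rfl⟩
      have h := (mem_pl_iff _ _ _).mp hle
      rw [dlin_vec] at h
      show t + d = 0
      simp at h
      linear_combination h
    · exact Or.inl rfl
  · rintro (rfl | ⟨t, ht, rfl⟩)
    · refine ⟨Or.inr rfl, (mem_pl_iff _ _ _).mpr ?_⟩
      rw [dlin_vec]; simp
    · refine ⟨Or.inl ⟨t, rfl⟩, (mem_pl_iff _ _ _).mpr ?_⟩
      rw [dlin_vec]
      simp
      linear_combination ht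

lemma sec_con :
    {p ∈ twistedCubic F | p.submodule ≤ pl ![0, 0, 0, 1]} = {tci F} := by
  ext p
  simp only [Set.mem_setOf_eq, Set.mem_singleton_iff, twistedCubic]
  constructor
  · rintro ⟨hC | rfl, hle⟩
    · obtain ⟨t, rfl⟩ := hC
      exfalso
      have h := (mem_pl_iff _ _ _).mp hle
      rw [dlin_vec] at h
      simp at h
    · rfl
  · rintro rfl
    refine ⟨Or.inr rfl, (mem_pl_iff _ _ _).mpr ?_⟩
    rw [dlin_vec]; simp

instance : Finite (ℙ F (Fin 4 → F)) := Quotient.finite _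

lemma ncard_sec_cub (b c d : F) :
    {p ∈ twistedCubic F | p.submodule ≤ pl ![1, b, c, d]}.ncard = rc3 b c d := by
  rw [sec_cub, Set.ncard_image_of_injective _ tcp_injective]
  rw [show {t : F | t ^ 3 + b * t ^ 2 + c * t + d = 0} =
    ↑(Finset.univ.filter fun t : F => t ^ 3 + b * t ^ 2 + c * t + d = 0) from by ext; simp]
  rw [Set.ncard_coe_finset, rc3_eq_card_filter]

lemma ncard_sec_qud (c d : F) :
    {p ∈ twistedCubic F | p.submodule ≤ pl ![0, 1, c, d]}.ncard = rc2 c d + 1 := by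
  rw [sec_qud, Set.ncard_insert_of_notMem (by rintro ⟨t, _, h⟩; exact tci_ne_tcp t h.symm)
    (Set.toFinite _), Set.ncard_image_of_injective _ tcp_injective]
  rw [show {t : F | t ^ 2 + c * t + d = 0} =
    ↑(Finset.univ.filter fun t : F => t ^ 2 + c * t + d = 0) from by ext; simp]
  rw [Set.ncard_coe_finset, rc2_eq_card_filter]

lemma ncard_sec_lin (d : F) :
    {p ∈ twistedCubic F | p.submodule ≤ pl ![0, 0, 1, d]}.ncard = 2 := by
  rw [sec_lin, Set.ncard_insert_of_notMem (by rintro ⟨t, _, h⟩; exact tci_ne_tcp t h.symm)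
    (Set.toFinite _), Set.ncard_image_of_injective _ tcp_injective]
  rw [show {t : F | t + d = 0} = {-d} from by ext t; simp [add_eq_zero_iff_eq_neg]]
  rw [Set.ncard_singleton]

lemma ncard_sec_con :
    {p ∈ twistedCubic F | p.submodule ≤ pl ![0, 0, 0, 1]}.ncard = 1 := by
  rw [sec_con, Set.ncard_singleton]

def e3m (x : F × F × F) : Fin 4 → F := ![1, x.1, x.2.1, x.2.2]
def e2m (x : F × F) : Fin 4 → F := ![0, 1, x.1, x.2]
def e1m (x : F) : Fin 4 → F := ![0, 0, 1, x]
def e0m : Fin 4 → F := ![0, 0, 0, 1]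

def pvecs (F : Type) [Field F] : Set (Fin 4 → F) :=
  Set.range e3m ∪ Set.range e2m ∪ Set.range e1m ∪ {e0m}

lemma e3m_injective : Function.Injective (e3m (F := F)) := by
  rintro ⟨a, b, c⟩ ⟨a', b', c'⟩ h
  have h1 := congrFun h 1; have h2 := congrFun h 2; have h3 := congrFun h 3
  simp [e3m] at h1 h2 h3
  simp [h1, h2, h3]

lemma e2m_injective : Function.Injective (e2m (F := F)) := by
  rintro ⟨a, b⟩ ⟨a', b'⟩ h
  have h2 := congrFun h 2; have h3 := congrFun h 3
  simp [e2m] at h2 h3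
  simp [h2, h3]

lemma e1m_injective : Function.Injective (e1m (F := F)) := by
  intro a a' h
  have h3 := congrFun h 3
  simpa [e1m] using h3

lemma pvec_lead {v : Fin 4 → F} (h : v ∈ pvecs F) :
    ∃ i : Fin 4, v i = 1 ∧ ∀ j, j < i → v j = 0 := by
  rcases h with ((⟨x, rfl⟩ | ⟨x, rfl⟩) | ⟨x, rfl⟩) | rfl
  · exact ⟨0, by simp [e3m], fun j hj => absurd hj (by simp)⟩
  · refine ⟨1, by simp [e2m], fun j hj => ?_⟩
    fin_cases j <;> simp_all [e2m]
  · refine ⟨2, by simp [e1m], fun j hj => ?_⟩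
    fin_cases j <;> simp_all [e1m]
  · refine ⟨3, by simp [e0m], fun j hj => ?_⟩
    fin_cases j <;> simp_all [e0m]

lemma pvec_ne_zero {v : Fin 4 → F} (h : v ∈ pvecs F) : v ≠ 0 := by
  obtain ⟨i, hi, -⟩ := pvec_lead h
  intro h0
  rw [h0] at hi
  simpa using hi

lemma pl_injOn : ∀ v ∈ pvecs F, ∀ w ∈ pvecs F, pl v = pl w → v = w := by
  intro v hv w hw hpl
  obtain ⟨a, ha, haw⟩ := dlin_prop v w (pvec_ne_zero hv) (pvec_ne_zero hw) hpl
  obtain ⟨i, hi1, hi0⟩ := pvec_lead hv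
  obtain ⟨i', hi1', hi0'⟩ := pvec_lead hw
  have hii : i = i' := by
    rcases lt_trichotomy i i' with h | h | h
    · exfalso
      have := hi0' i h
      rw [haw] at this
      simp only [Pi.smul_apply, smul_eq_mul, hi1, mul_one] at this
      rw [haw] at hi1'
      simp only [Pi.smul_apply, smul_eq_mul] at hi1'
      rw [this, zero_mul] at hi1'
      exact one_ne_zero hi1'.symm
    · exact h
    · exfalso
      have := hi0 i' h
      rw [haw] at hi1'
      simp only [Pi.smul_apply, smul_eq_mul] at hi1'
      rw [this, mul_zero] at hi1'
      exact one_ne_zero hi1'.symm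
  have ha1 : a = 1 := by
    rw [← hii] at hi1'
    rw [haw] at hi1'
    simpa [Pi.smul_apply, hi1] using hi1'
  rw [haw, ha1, one_smul]

lemma eta4 (u : Fin 4 → F) : ![u 0, u 1, u 2, u 3] = u := by
  funext i; fin_cases i <;> rfl

lemma pl_smul (c : F) (hc : c ≠ 0) (v : Fin 4 → F) : pl (c • v) = pl v := by
  unfold pl
  rw [show dlin (c • v) = c • dlin v from by
    ext w; simp [dlin_apply, Pi.smul_apply, smul_eq_mul]; ring]
  exact LinearMap.ker_smul _ c hc

lemma exists_pvec (v : Fin 4 → F) (hv : v ≠ 0) : ∃ w ∈ pvecs F, pl w = pl v := by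
  by_cases h0 : v 0 ≠ 0
  · refine ⟨(v 0)⁻¹ • v, ?_, pl_smul _ (inv_ne_zero h0) v⟩
    refine Or.inl (Or.inl (Or.inl ⟨(((v 0)⁻¹ • v) 1, ((v 0)⁻¹ • v) 2, ((v 0)⁻¹ • v) 3), ?_⟩))
    unfold e3m
    rw [show (1 : F) = ((v 0)⁻¹ • v) 0 from by simp [inv_mul_cancel₀ h0]]
    exact eta4 _
  push_neg at h0
  by_cases h1 : v 1 ≠ 0
  · refine ⟨(v 1)⁻¹ • v, ?_, pl_smul _ (inv_ne_zero h1) v⟩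
    refine Or.inl (Or.inl (Or.inr ⟨(((v 1)⁻¹ • v) 2, ((v 1)⁻¹ • v) 3), ?_⟩))
    unfold e2m
    rw [show (0 : F) = ((v 1)⁻¹ • v) 0 from by simp [h0],
      show (1 : F) = ((v 1)⁻¹ • v) 1 from by simp [inv_mul_cancel₀ h1]]
    exact eta4 _
  push_neg at h1
  by_cases h2 : v 2 ≠ 0
  · refine ⟨(v 2)⁻¹ • v, ?_, pl_smul _ (inv_ne_zero h2) v⟩
    refine Or.inl (Or.inr ⟨((v 2)⁻¹ • v) 3, ?_⟩)
    unfold e1m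
    funext i
    fin_cases i <;> simp [h0, h1, inv_mul_cancel₀ h2]
  push_neg at h2
  have h3 : v 3 ≠ 0 := by
    intro h3
    apply hv
    funext i
    fin_cases i <;> simp_all
  refine ⟨(v 3)⁻¹ • v, ?_, pl_smul _ (inv_ne_zero h3) v⟩
  refine Or.inr ?_
  show (v 3)⁻¹ • v = e0m
  unfold e0m
  funext i
  fin_cases i <;> simp [h0, h1, h2, inv_mul_cancel₀ h3]

lemma finrank_pl {v : Fin 4 → F} (hv : v ≠ 0) : Module.finrank F (pl v) = 3 :=
  finrank_ker_dlin v hv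

lemma master (k : ℕ) :
    {W : Submodule F (Fin 4 → F) | Module.finrank F W = 3 ∧
        {p ∈ twistedCubic F | p.submodule ≤ W}.ncard = k} =
      pl '' {v ∈ pvecs F | {p ∈ twistedCubic F | p.submodule ≤ pl v}.ncard = k} := by
  ext W
  constructor
  · rintro ⟨hrank, hcount⟩
    obtain ⟨v, hv0, hWv⟩ := exists_dlin_of_finrank_three W hrank
    obtain ⟨w, hw, hplw⟩ := exists_pvec v hv0
    have hWw : W = pl w := by rw [hplw]; exact hWv
    exact ⟨w, ⟨hw, by rw [← hWw]; exact hcount⟩, hWw.symm⟩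
  · rintro ⟨v, ⟨hv, hcount⟩, rfl⟩
    exact ⟨finrank_pl (pvec_ne_zero hv), hcount⟩

lemma ncard_master (k : ℕ) :
    {W : Submodule F (Fin 4 → F) | Module.finrank F W = 3 ∧
        {p ∈ twistedCubic F | p.submodule ≤ W}.ncard = k}.ncard =
      {v ∈ pvecs F | {p ∈ twistedCubic F | p.submodule ≤ pl v}.ncard = k}.ncard := by
  rw [master k]
  exact Set.ncard_image_of_injOn fun v hv w hw h => pl_injOn v hv.1 w hw.1 h

lemma two_choose_two : ∀ m : ℕ, 2 * ((m + 2).choose 2) = (m + 2) * (m + 1)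
  | 0 => by decide
  | (m + 1) => by
    rw [show m + 1 + 2 = (m + 2) + 1 from rfl, Nat.choose_succ_succ' (m + 2) 1,
      Nat.mul_add, two_choose_two m, Nat.choose_one_right]
    ring

lemma six_choose_three : ∀ m : ℕ, 6 * ((m + 2).choose 3) = (m + 2) * (m + 1) * m
  | 0 => by decide
  | (m + 1) => by
    rw [show m + 1 + 2 = (m + 2) + 1 from rfl, Nat.choose_succ_succ' (m + 2) 2,
      Nat.mul_add, six_choose_three m,
      show (6 : ℕ) = 3 * 2 from rfl, Nat.mul_assoc, two_choose_two m]
    ring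

lemma arith_three {q : ℕ} (h : 2 ≤ q) : q.choose 3 + q.choose 2 = (q ^ 3 - q) / 6 := by
  obtain ⟨m, rfl⟩ : ∃ m, q = m + 2 := ⟨q - 2, by omega⟩
  symm
  apply Nat.div_eq_of_eq_mul_left (by norm_num)
  have h6 := six_choose_three m
  have h2 := two_choose_two m
  have hle : (m + 2) ≤ (m + 2) ^ 3 := by nlinarith
  have h6z : (6 : ℤ) * (((m + 2).choose 3 : ℕ) : ℤ) = ((m : ℤ) + 2) * ((m : ℤ) + 1) * m := by
    exact_mod_cast h6
  have h2z : (2 : ℤ) * (((m + 2).choose 2 : ℕ) : ℤ) = ((m : ℤ) + 2) * ((m : ℤ) + 1) := by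
    exact_mod_cast h2
  zify [hle]
  linear_combination -h6z - 3 * h2z

lemma arith_two {q : ℕ} (h : 2 ≤ q) : (q * q - q) + q + q = q ^ 2 + q := by
  have hle : q ≤ q * q := Nat.le_mul_of_pos_left q (by omega)
  have : q ^ 2 = q * q := sq q
  omega

lemma arith_zero {q : ℕ} (h : 2 ≤ q) : (q * q - q) + 2 * q.choose 3 = (q ^ 3 - q) / 3 := by
  obtain ⟨m, rfl⟩ : ∃ m, q = m + 2 := ⟨q - 2, by omega⟩
  symm
  apply Nat.div_eq_of_eq_mul_left (by norm_num)
  have h6 := six_choose_three m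
  have hle : (m + 2) ≤ (m + 2) ^ 3 := by nlinarith
  have hle2 : (m + 2) ≤ (m + 2) * (m + 2) := Nat.le_mul_of_pos_left _ (by omega)
  have h6z : (6 : ℤ) * (((m + 2).choose 3 : ℕ) : ℤ) = ((m : ℤ) + 2) * ((m : ℤ) + 1) * m := by
    exact_mod_cast h6
  zify [hle, hle2]
  linear_combination -h6z

lemma sep_decomp (P : (Fin 4 → F) → Prop) :
    {v ∈ pvecs F | P v} =
      (e3m '' {x : F × F × F | P (e3m x)}) ∪ (e2m '' {x : F × F | P (e2m x)}) ∪
      (e1m '' {x : F | P (e1m x)}) ∪ {v ∈ ({e0m} : Set (Fin 4 → F)) | P v} := by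
  ext v
  simp only [pvecs, Set.mem_union, Set.mem_setOf_eq, Set.mem_image, Set.mem_range,
    Set.mem_singleton_iff]
  aesop

lemma disj_32 (S1 : Set (F × F × F)) (S2 : Set (F × F)) :
    Disjoint (e3m '' S1) (e2m '' S2) := by
  rw [Set.disjoint_left]
  rintro v ⟨x, -, rfl⟩ ⟨y, -, hy⟩
  have := congrFun hy 0
  simp [e3m, e2m] at this

lemma disj_31 (S1 : Set (F × F × F)) (S2 : Set F) :
    Disjoint (e3m '' S1) (e1m '' S2) := by
  rw [Set.disjoint_left]
  rintro v ⟨x, -, rfl⟩ ⟨y, -, hy⟩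
  have := congrFun hy 0
  simp [e3m, e1m] at this

lemma disj_21 (S1 : Set (F × F)) (S2 : Set F) :
    Disjoint (e2m '' S1) (e1m '' S2) := by
  rw [Set.disjoint_left]
  rintro v ⟨x, -, rfl⟩ ⟨y, -, hy⟩
  have := congrFun hy 1
  simp [e2m, e1m] at this

lemma disj_0 (S1 : Set (F × F × F)) (S2 : Set (F × F)) (S3 : Set F)
    (P : (Fin 4 → F) → Prop) :
    Disjoint ((e3m '' S1) ∪ (e2m '' S2) ∪ (e1m '' S3))
      {v ∈ ({e0m} : Set (Fin 4 → F)) | P v} := by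
  rw [Set.disjoint_right]
  rintro v ⟨rfl, -⟩
  rintro ((⟨x, -, hy⟩ | ⟨x, -, hy⟩) | ⟨x, -, hy⟩)
  · have := congrFun hy 0; simp [e3m, e0m] at this
  · have := congrFun hy 1; simp [e2m, e0m] at this
  · have := congrFun hy 2; simp [e1m, e0m] at this

lemma ncard_sep_decomp (P : (Fin 4 → F) → Prop) :
    {v ∈ pvecs F | P v}.ncard =
      {x : F × F × F | P (e3m x)}.ncard + {x : F × F | P (e2m x)}.ncard +
      {x : F | P (e1m x)}.ncard + {v ∈ ({e0m} : Set (Fin 4 → F)) | P v}.ncard := by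
  rw [sep_decomp]
  rw [Set.ncard_union_eq (disj_0 _ _ _ _) (Set.toFinite _) (Set.toFinite _),
    Set.ncard_union_eq (Set.disjoint_union_left.mpr ⟨disj_31 _ _, disj_21 _ _⟩)
      (Set.toFinite _) (Set.toFinite _),
    Set.ncard_union_eq (disj_32 _ _) (Set.toFinite _) (Set.toFinite _),
    Set.ncard_image_of_injective _ e3m_injective,
    Set.ncard_image_of_injective _ e2m_injective,
    Set.ncard_image_of_injective _ e1m_injective]

lemma ncard_k (k : ℕ) :
    {W : Submodule F (Fin 4 → F) | Module.finrank F W = 3 ∧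
        {p ∈ twistedCubic F | p.submodule ≤ W}.ncard = k}.ncard =
      (Finset.univ.filter fun x : F × F × F => rc3 x.1 x.2.1 x.2.2 = k).card +
      (Finset.univ.filter fun x : F × F => rc2 x.1 x.2 + 1 = k).card +
      (Finset.univ.filter fun _ : F => 2 = k).card +
      (if (1 : ℕ) = k then 1 else 0) := by
  rw [ncard_master, ncard_sep_decomp]
  congr 1
  · congr 1
    · congr 1
      · rw [show {x : F × F × F |
            {p ∈ twistedCubic F | p.submodule ≤ pl (e3m x)}.ncard = k} =
            ↑(Finset.univ.filter fun x : F × F × F => rc3 x.1 x.2.1 x.2.2 = k) from by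
          ext x
          simp only [Set.mem_setOf_eq, Finset.coe_filter, Finset.mem_univ, true_and]
          rw [show pl (e3m x) = pl ![1, x.1, x.2.1, x.2.2] from rfl, ncard_sec_cub]]
        rw [Set.ncard_coe_finset]
      · rw [show {x : F × F |
            {p ∈ twistedCubic F | p.submodule ≤ pl (e2m x)}.ncard = k} =
            ↑(Finset.univ.filter fun x : F × F => rc2 x.1 x.2 + 1 = k) from by
          ext x
          simp only [Set.mem_setOf_eq, Finset.coe_filter, Finset.mem_univ, true_and]
          rw [show pl (e2m x) = pl ![0, 1, x.1, x.2] from rfl, ncard_sec_qud]]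
        rw [Set.ncard_coe_finset]
    · rw [show {x : F | {p ∈ twistedCubic F | p.submodule ≤ pl (e1m x)}.ncard = k} =
          ↑(Finset.univ.filter fun _ : F => 2 = k) from by
        ext x
        simp only [Set.mem_setOf_eq, Finset.coe_filter, Finset.mem_univ, true_and]
        rw [show pl (e1m x) = pl ![0, 0, 1, x] from rfl, ncard_sec_lin]]
      rw [Set.ncard_coe_finset]
  · by_cases hk : (1 : ℕ) = k
    · rw [if_pos hk]
      rw [show {v ∈ ({e0m} : Set (Fin 4 → F)) |
          {p ∈ twistedCubic F | p.submodule ≤ pl v}.ncard = k} = {e0m} from by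
        ext v
        simp only [Set.mem_setOf_eq, Set.mem_singleton_iff]
        constructor
        · rintro ⟨h, -⟩; exact h
        · rintro rfl
          refine ⟨rfl, ?_⟩
          rw [show pl (e0m : Fin 4 → F) = pl ![0, 0, 0, 1] from rfl, ncard_sec_con, hk]]
      exact Set.ncard_singleton _
    · rw [if_neg hk]
      rw [show {v ∈ ({e0m} : Set (Fin 4 → F)) |
          {p ∈ twistedCubic F | p.submodule ≤ pl v}.ncard = k} = ∅ from by
        ext v
        simp only [Set.mem_setOf_eq, Set.mem_empty_iff_false, iff_false, not_and]
        rintro rfl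
        rw [show pl (e0m : Fin 4 → F) = pl ![0, 0, 0, 1] from rfl, ncard_sec_con]
        exact fun h => hk h]
      exact Set.ncard_empty _

/-- In `PG(3,q)`, `q ≥ 5`, the number of planes meeting the twisted cubic `C` in
exactly `3` points is `(q³-q)/6`, in exactly `2` points is `q²+q`, and in `0` points
is `(q³-q)/3`. -/
theorem card_planes_meeting_twistedCubic (F : Type) [Field F] [Fintype F]
    (hq : 5 ≤ Fintype.card F) :
    {W : Submodule F (Fin 4 → F) | Module.finrank F W = 3 ∧
        {p ∈ twistedCubic F | p.submodule ≤ W}.ncard = 3}.ncard =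
      ((Fintype.card F) ^ 3 - Fintype.card F) / 6 ∧
    {W : Submodule F (Fin 4 → F) | Module.finrank F W = 3 ∧
        {p ∈ twistedCubic F | p.submodule ≤ W}.ncard = 2}.ncard =
      (Fintype.card F) ^ 2 + Fintype.card F ∧
    {W : Submodule F (Fin 4 → F) | Module.finrank F W = 3 ∧
        {p ∈ twistedCubic F | p.submodule ≤ W}.ncard = 0}.ncard =
      ((Fintype.card F) ^ 3 - Fintype.card F) / 3 := by
  classical
  have hq2 : 2 ≤ Fintype.card F := by omega
  refine ⟨?_, ?_, ?_⟩
  · rw [ncard_k 3,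
      show (Finset.univ.filter fun x : F × F => rc2 x.1 x.2 + 1 = 3) =
        Finset.univ.filter (fun x : F × F => rc2 x.1 x.2 = 2) from
        Finset.filter_congr fun x _ => by omega,
      count_cub_three, count_qud_two,
      show (Finset.univ.filter fun _ : F => (2 : ℕ) = 3) = ∅ from by simp,
      if_neg (by omega : ¬ (1 : ℕ) = 3)]
    simp only [Finset.card_empty, add_zero]
    exact arith_three hq2
  · rw [ncard_k 2,
      show (Finset.univ.filter fun x : F × F => rc2 x.1 x.2 + 1 = 2) =
        Finset.univ.filter (fun x : F × F => rc2 x.1 x.2 = 1) from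
        Finset.filter_congr fun x _ => by omega,
      count_cub_two, count_qud_one,
      show (Finset.univ.filter fun _ : F => (2 : ℕ) = 2) = Finset.univ from by simp,
      if_neg (by omega : ¬ (1 : ℕ) = 2)]
    rw [Finset.card_univ, add_zero]
    have h := arith_two hq2
    omega
  · rw [ncard_k 0,
      show (Finset.univ.filter fun x : F × F => rc2 x.1 x.2 + 1 = 0) = ∅ from
        Finset.filter_false_of_mem fun x _ => by omega,
      count_cub_zero,
      show (Finset.univ.filter fun _ : F => (2 : ℕ) = 0) = ∅ from by simp,
      if_neg (by omega : ¬ (1 : ℕ) = 0)]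
    simp only [Finset.card_empty, add_zero]
    exact arith_zero hq2
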